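/- arXiv:2004.07128 — 2 statements merged into one kernel-verified Lean document; each statement's English description precedes it below -/
import Mathlib

section
/- For the ECA rule 44, with local rule h(a,b,c) = (¬a ∧ b) ∨ (a ∧ ¬b ∧ c), and for every n > 3: for all block-sequential update schedules τ and τ', the asynchronous global functions differ, f^{(τ)} ≠ f^{(τ')}, if and only if there exists a cell i ∈ ℤ/nℤ with lab_τ((i−1,i)) ≠ lab_τ'((i−1,i)). -/
/-- One round of a block-sequential update: all cells of rank `k` are updated
simultaneously by the ECA local rule `h`, reading the current states. -/
def ecaStep (n : ℕ) (h : Bool → Bool → Bool → Bool) (τ : ZMod n → ℕ) (k : ℕ)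
    (x : ZMod n → Bool) : ZMod n → Bool :=
  fun i => if τ i = k then h (x (i - 1)) (x i) (x (i + 1)) else x i

/-- State after processing ranks `0, 1, …, k` in increasing order. -/
def ecaUpTo (n : ℕ) (h : Bool → Bool → Bool → Bool) (τ : ZMod n → ℕ) :
    ℕ → (ZMod n → Bool) → ZMod n → Bool
  | 0 => ecaStep n h τ 0
  | k + 1 => fun x => ecaStep n h τ (k + 1) (ecaUpTo n h τ k x)

/-- Asynchronous global function `f^{(τ)}` for the block-sequential update
schedule `τ : ZMod n → ℕ` (rank of each cell): a cell keeps the value it gets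
in the round where it is updated (it is never updated again afterwards). -/
def ecaAsync (n : ℕ) (h : Bool → Bool → Bool → Bool) (τ : ZMod n → ℕ)
    (x : ZMod n → Bool) : ZMod n → Bool :=
  fun i => ecaUpTo n h τ (τ i) x i

/-- Synchronous global function of the ECA with local rule `h`. -/
def ecaSync (n : ℕ) (h : Bool → Bool → Bool → Bool) (x : ZMod n → Bool) :
    ZMod n → Bool :=
  fun i => h (x (i - 1)) (x i) (x (i + 1))

/-- Label of the arc `(i, j)` for schedule `τ`:
`true` = ⊕ (τ i ≥ τ j), `false` = ⊖ (τ i < τ j). -/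
def lab (n : ℕ) (τ : ZMod n → ℕ) (i j : ZMod n) : Bool :=
  decide (τ j ≤ τ i)

abbrev r44 : Bool → Bool → Bool → Bool := fun a b c => (!a && b) || (a && !b && c)

def fval (n : ℕ) (σ : ZMod n → ℕ) (x : ZMod n → Bool) (j : ZMod n) : Bool :=
  r44 (if h : σ j ≤ σ (j - 1) then x (j - 1) else fval n σ x (j - 1)) (x j) (x (j + 1))
termination_by σ j
decreasing_by simp_wf; omega

theorem upTo_lt (n : ℕ) (h) (τ : ZMod n → ℕ) :
    ∀ k x (j : ZMod n), k < τ j → ecaUpTo n h τ k x j = x j := by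
  intro k
  induction k with
  | zero =>
    intro x j hj
    have hne : τ j ≠ 0 := by omega
    simp [ecaUpTo, ecaStep, hne]
  | succ k ih =>
    intro x j hj
    have hne : τ j ≠ k + 1 := by omega
    simp only [ecaUpTo, ecaStep, hne, if_false]
    exact ih x j (by omega)

theorem upTo_ge (n : ℕ) (h) (τ : ZMod n → ℕ) :
    ∀ k x (j : ZMod n), τ j ≤ k → ecaUpTo n h τ k x j = ecaUpTo n h τ (τ j) x j := by
  intro k
  induction k with
  | zero =>
    intro x j hj
    have : τ j = 0 := by omega
    rw [this]
  | succ k ih =>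
    intro x j hj
    by_cases he : τ j = k + 1
    · rw [he]
    · have h2 : τ j ≤ k := by omega
      have hstep : ecaUpTo n h τ (k+1) x j = ecaUpTo n h τ k x j := by
        simp only [ecaUpTo, ecaStep, he, if_false]
      rw [hstep, ih x j h2]

theorem async_unfold (n : ℕ) (h) (τ : ZMod n → ℕ) (x : ZMod n → Bool) (j : ZMod n) :
    ecaAsync n h τ x j =
      h (if τ (j-1) < τ j then ecaAsync n h τ x (j-1) else x (j-1)) (x j)
        (if τ (j+1) < τ j then ecaAsync n h τ x (j+1) else x (j+1)) := by
  show ecaUpTo n h τ (τ j) x j = _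
  rcases hk : τ j with _ | k
  · simp only [Nat.not_lt_zero, if_false]
    simp [ecaUpTo, ecaStep, hk]
  · have hxj : ecaUpTo n h τ k x j = x j := upTo_lt n h τ k x j (by omega)
    have hnb : ∀ m : ZMod n, ecaUpTo n h τ k x m =
        if τ m < k + 1 then ecaAsync n h τ x m else x m := by
      intro m
      by_cases hm : τ m ≤ k
      · rw [if_pos (by omega)]
        exact upTo_ge n h τ k x m hm
      · rw [if_neg (by omega)]
        exact upTo_lt n h τ k x m (by omega)
    simp only [ecaUpTo, ecaStep, hk, hxj, hnb, if_true, eq_self_iff_true]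

theorem async_eq_fval (n : ℕ) (τ : ZMod n → ℕ) (x : ZMod n → Bool) (j : ZMod n) :
    ecaAsync n r44 τ x j = fval n τ x j := by
  have key : ∀ N (j : ZMod n), τ j < N → ecaAsync n r44 τ x j = fval n τ x j := by
    intro N
    induction N with
    | zero => intro j hj; omega
    | succ N ih =>
      intro j hj
      rw [async_unfold, fval]
      have hL : (if τ (j-1) < τ j then ecaAsync n r44 τ x (j-1) else x (j-1)) =
          (if _ : τ j ≤ τ (j-1) then x (j-1) else fval n τ x (j-1)) := by
        by_cases hc : τ j ≤ τ (j-1)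
        · rw [if_neg (by omega), dif_pos hc]
        · rw [if_pos (by omega), dif_neg hc, ih (j-1) (by omega)]
      rw [hL]
      generalize (if _ : τ j ≤ τ (j-1) then x (j-1) else fval n τ x (j-1)) = L
      by_cases hR : τ (j+1) < τ j
      · rw [if_pos hR, ih (j+1) (by omega), fval]
        rw [show j + 1 - 1 = j from add_sub_cancel_right j 1]
        rw [dif_pos (by omega : τ (j+1) ≤ τ j)]
        cases L <;> cases x j <;> cases x (j+1) <;> cases x (j+1+1) <;> rfl
      · rw [if_neg hR]
  exact key (τ j + 1) j (by omega)

theorem fval_congr (n : ℕ) (τ τ' : ZMod n → ℕ)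
    (hl : ∀ i : ZMod n, (τ i ≤ τ (i-1) ↔ τ' i ≤ τ' (i-1))) (x : ZMod n → Bool) :
    ∀ j, fval n τ x j = fval n τ' x j := by
  have key : ∀ N (j : ZMod n), τ j < N → fval n τ x j = fval n τ' x j := by
    intro N
    induction N with
    | zero => intro j hj; omega
    | succ N ih =>
      intro j hj
      rw [fval]
      conv_rhs => rw [fval]
      by_cases hc : τ j ≤ τ (j-1)
      · rw [dif_pos hc, dif_pos ((hl j).1 hc)]
      · rw [dif_neg hc, dif_neg (fun h' => hc ((hl j).2 h')), ih (j-1) (by omega)]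
  intro j; exact key (τ j + 1) j (by omega)

def T2 : Bool × Bool → Bool × Bool
  | (true, true) => (true, false)
  | (true, false) => (false, true)
  | (false, true) => (true, true)
  | (false, false) => (false, false)

def seqS (n : ℕ) (σ : ZMod n → ℕ) (i : ZMod n) : ℕ → Bool × Bool
  | 0 => (true, true)
  | 1 => (true, !decide (n % 3 = 1))
  | (k+2) => if σ (i - ((k+1 : ℕ) : ZMod n)) ≤ σ (i - ((k+2 : ℕ) : ZMod n))
      then (true, (seqS n σ i (k+1)).1)
      else T2 (seqS n σ i (k+1))

def pat (b : Bool) (k : ℕ) : Bool × Bool :=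
  if b then
    match (k-1) % 3 with
    | 0 => (true, true) | 1 => (true, false) | _+2 => (false, true)
  else
    match (k-1) % 3 with
    | 0 => (true, false) | 1 => (false, true) | _+2 => (true, true)

theorem T2_pat (b : Bool) (k : ℕ) (hk : 1 ≤ k) : T2 (pat b k) = pat b (k+1) := by
  have h3 : (k-1) % 3 = 0 ∨ (k-1) % 3 = 1 ∨ (k-1) % 3 = 2 := by omega
  rcases h3 with h | h | h
  · have h' : k % 3 = 1 := by omega
    cases b <;> simp [pat, h, h', T2]
  · have h' : k % 3 = 2 := by omega
    cases b <;> simp [pat, h, h', T2]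
  · have h' : k % 3 = 0 := by omega
    cases b <;> simp [pat, h, h', T2]

theorem seqS_pat (n : ℕ) (σ : ZMod n → ℕ) (i : ZMod n) :
    ∀ k, 1 ≤ k →
    (∀ m, 1 ≤ m → m < k → ¬ σ (i - ((m:ℕ) : ZMod n)) ≤ σ (i - ((m+1:ℕ) : ZMod n))) →
    seqS n σ i k = pat (!decide (n % 3 = 1)) k := by
  intro k
  induction k with
  | zero => omega
  | succ k ih =>
    intro _ hm
    rcases Nat.eq_zero_or_pos k with rfl | hk
    · cases hb : decide (n % 3 = 1) <;> simp [seqS, pat, hb]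
    · obtain ⟨m, rfl⟩ : ∃ m, k = m + 1 := ⟨k-1, by omega⟩
      have hcond : ¬ σ (i - ((m+1 : ℕ) : ZMod n)) ≤ σ (i - ((m+2 : ℕ) : ZMod n)) :=
        hm (m+1) (by omega) (by omega)
      have hst : seqS n σ i (m+2) = T2 (seqS n σ i (m+1)) := by
        simp only [seqS, if_neg hcond]
      rw [hst, ih (by omega) (fun m' h1 h2 => hm m' h1 (by omega)), T2_pat _ _ (by omega)]

theorem v_top (n : ℕ) (hn : 3 < n) (σ : ZMod n → ℕ) (i : ZMod n)
    (hall : ∀ m, 1 ≤ m → m < n-1 → ¬ σ (i - ((m:ℕ):ZMod n)) ≤ σ (i - ((m+1:ℕ):ZMod n))) :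
    (seqS n σ i (n-1)).1 = true := by
  rw [seqS_pat n σ i (n-1) (by omega) hall]
  by_cases h1 : n % 3 = 1
  · have h2 : (n-1-1) % 3 = 2 := by omega
    simp [pat, h1, h2]
  · have h2 : (n-1-1) % 3 = 0 ∨ (n-1-1) % 3 = 1 := by omega
    rcases h2 with h2 | h2 <;> simp [pat, h1, h2]

theorem claimR (n : ℕ) (hn : 3 < n) (σ : ZMod n → ℕ) (i : ZMod n) :
    ∀ d k, n - k ≤ d → 1 ≤ k → k < n →
    (∀ m : ℕ, m < k → σ (i - ((m+1 : ℕ) : ZMod n)) < σ (i - ((m : ℕ) : ZMod n))) →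
    (if _ : σ (i - ((k:ℕ) : ZMod n)) ≤ σ (i - ((k+1:ℕ) : ZMod n))
      then (fun j => (seqS n σ i (i - j).val).2) (i - ((k+1:ℕ):ZMod n))
      else fval n σ (fun j => (seqS n σ i (i - j).val).2) (i - ((k+1:ℕ):ZMod n)))
      = (seqS n σ i k).1 := by
  haveI : NeZero n := ⟨by omega⟩
  set x : ZMod n → Bool := fun j => (seqS n σ i (i - j).val).2 with hxdef
  have hx : ∀ m : ℕ, m < n → x (i - (m : ZMod n)) = (seqS n σ i m).2 := by
    intro m hm
    show (seqS n σ i (i - (i - (m:ZMod n))).val).2 = _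
    rw [sub_sub_cancel, ZMod.val_natCast, Nat.mod_eq_of_lt hm]
  intro d
  induction d with
  | zero => intro k h0 h1 h2 _; omega
  | succ d ih =>
    intro k hd h1 h2 hm
    by_cases hc : σ (i - ((k:ℕ):ZMod n)) ≤ σ (i - ((k+1:ℕ):ZMod n))
    · rw [dif_pos hc]
      by_cases hkn : k + 1 < n
      · rw [hx (k+1) hkn]
        obtain ⟨m, rfl⟩ : ∃ m, k = m + 1 := ⟨k-1, by omega⟩
        show (seqS n σ i (m+2)).2 = _
        simp only [seqS, if_pos hc]
      · have h0 : ((k+1 : ℕ) : ZMod n) = 0 := by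
          rw [show k+1 = n by omega]; exact ZMod.natCast_self n
        rw [h0, sub_zero]
        have hxi : x i = true := by
          show (seqS n σ i (i - i).val).2 = true
          rw [sub_self]
          simp [seqS]
        rw [hxi, show k = n - 1 by omega]
        exact (v_top n hn σ i (fun m hm1 hm2 => not_le.mpr (hm m (by omega)))).symm
    · rw [dif_neg hc]
      have hmono : ∀ m, m ≤ k → σ (i - (m:ZMod n)) + m ≤ σ i := by
        intro m
        induction m with
        | zero => intro _; simp
        | succ m ihm =>
          intro hmk
          have ha := hm m (by omega)
          have hb := ihm (by omega)
          omega
      have hkn : k + 1 < n := by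
        by_contra hge
        have h0 : ((k+1:ℕ) : ZMod n) = 0 := by
          rw [show k+1 = n by omega]; exact ZMod.natCast_self n
        rw [h0, sub_zero] at hc
        have := hmono k (le_refl k)
        omega
      rw [fval]
      have e1 : i - ((k+1:ℕ):ZMod n) - 1 = i - ((k+2:ℕ):ZMod n) := by push_cast; ring
      have e2 : i - ((k+1:ℕ):ZMod n) + 1 = i - ((k:ℕ):ZMod n) := by push_cast; ring
      rw [e1, e2, hx (k+1) hkn, hx k (by omega)]
      have hm' : ∀ m : ℕ, m < k + 1 → σ (i - ((m+1 : ℕ) : ZMod n)) < σ (i - ((m : ℕ) : ZMod n)) := by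
        intro m hmlt
        rcases Nat.lt_or_ge m k with hlt | hge
        · exact hm m hlt
        · have : m = k := by omega
          subst this
          exact not_le.mp hc
      have hIH := ih (k+1) (by omega) (by omega) hkn hm'
      rw [hIH]
      obtain ⟨m, rfl⟩ : ∃ m, k = m + 1 := ⟨k-1, by omega⟩
      have hst : seqS n σ i (m+2) = T2 (seqS n σ i (m+1)) := by
        simp only [seqS, if_neg hc]
      rw [hst]
      generalize seqS n σ i (m+1) = p
      obtain ⟨v, b⟩ := p
      cases v <;> cases b <;> rfl

theorem construct (n : ℕ) (hn : 3 < n) (τ σ : ZMod n → ℕ) (i : ZMod n)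
    (hτ : τ i ≤ τ (i - 1)) (hσ : ¬ σ i ≤ σ (i - 1)) :
    ecaAsync n r44 τ ≠ ecaAsync n r44 σ := by
  haveI : NeZero n := ⟨by omega⟩
  set x : ZMod n → Bool := fun j => (seqS n σ i (i - j).val).2 with hxdef
  intro heq
  have hval := congrFun (congrFun heq x) i
  rw [async_eq_fval, async_eq_fval] at hval
  have e1 : ((1:ℕ) : ZMod n) = 1 := by push_cast; ring
  have e2 : i - ((2:ℕ) : ZMod n) = i - 1 - 1 := by push_cast; ring
  have hx1 : x (i - 1) = (seqS n σ i 1).2 := by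
    show (seqS n σ i (i - (i - 1)).val).2 = _
    rw [sub_sub_cancel]
    rw [show ((1 : ZMod n)) = ((1:ℕ) : ZMod n) by push_cast; ring]
    rw [ZMod.val_natCast, Nat.mod_eq_of_lt (by omega)]
  have hxi : x i = true := by
    show (seqS n σ i (i - i).val).2 = true
    rw [sub_self]
    simp [seqS]
  have hcl := claimR n hn σ i n 1 (by omega) (le_refl 1) (by omega)
    (fun m hm => by
      interval_cases m
      simpa using not_le.mp hσ)
  rw [e1] at hcl
  -- fval σ x (i-1) = ! (seqS 1).2
  have hf1 : fval n σ x (i - 1) = !(seqS n σ i 1).2 := by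
    rw [fval, e2.symm]
    rw [show i - 1 + 1 = i from sub_add_cancel i 1]
    rw [hcl, hx1, hxi]
    cases hb : decide (n % 3 = 1) <;> simp [seqS, hb]
  have hfσ : fval n σ x i = (seqS n σ i 1).2 := by
    rw [fval, dif_neg hσ, hf1, hxi]
    cases hb : (seqS n σ i 1).2 <;> simp [hb]
  have hfτ : fval n τ x i = !(seqS n σ i 1).2 := by
    rw [fval, dif_pos hτ, hx1, hxi]
    cases hb : (seqS n σ i 1).2 <;> simp [hb]
  rw [hfσ, hfτ] at hval
  cases hb : (seqS n σ i 1).2 <;> rw [hb] at hval <;> simp at hval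

/-- Rule 44 (h a b c = (¬a ∧ b) ∨ (a ∧ ¬b ∧ c)): two schedules give different
dynamics iff they differ on the label of some arc $(i-1,i)$. -/
theorem rule_44_dynamics_differ_iff (n : ℕ) (hn : 3 < n) (τ τ' : ZMod n → ℕ) :
    ecaAsync n (fun a b c => (!a && b) || (a && !b && c)) τ ≠
      ecaAsync n (fun a b c => (!a && b) || (a && !b && c)) τ' ↔
    ∃ i : ZMod n, lab n τ (i - 1) i ≠ lab n τ' (i - 1) i := by
  constructor
  · intro hne
    by_contra hno
    push_neg at hno
    apply hne
    funext x j
    show ecaAsync n r44 τ x j = ecaAsync n r44 τ' x j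
    rw [async_eq_fval, async_eq_fval]
    refine fval_congr n τ τ' (fun i => ?_) x j
    have := hno i
    unfold lab at this
    exact decide_eq_decide.mp this
  · rintro ⟨i, hi⟩
    unfold lab at hi
    by_cases h1 : τ i ≤ τ (i - 1) <;> by_cases h2 : τ' i ≤ τ' (i - 1)
    · simp [h1, h2] at hi
    · exact construct n hn τ τ' i h1 h2
    · exact (construct n hn τ' τ i h2 h1).symm
    · simp [h1, h2] at hi
end

section
/- For the ECA rule 8, with local rule h(a,b,c) = ¬a ∧ b ∧ c, and for every n ≥ 5: if two block-sequential update schedules τ and τ' satisfy, for some cell i ∈ ℤ/nℤ, (1) lab_τ((i+1,i)) = lab_τ'((i+1,i)) = ⊕, (2) lab_τ((i−1,i)) ≠ lab_τ'((i−1,i)), and (3) lab_τ((j,j−1)) = lab_τ'((j,j−1)) for every j ∈ ℤ/nℤ, then f^{(τ)} ≠ f^{(τ')}, i.e. the two dynamics differ. -/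
section Aux

variable {n : ℕ} {h : Bool → Bool → Bool → Bool} {τ : ZMod n → ℕ} {x : ZMod n → Bool}

lemma ecaUpTo_notYet (k : ℕ) (j : ZMod n) (hk : k < τ j) :
    ecaUpTo n h τ k x j = x j := by
  induction k with
  | zero =>
    simp only [ecaUpTo, ecaStep]
    rw [if_neg (by omega)]
  | succ m ih =>
    simp only [ecaUpTo, ecaStep]
    rw [if_neg (by omega), ih (by omega)]

lemma ecaUpTo_frozen (k : ℕ) (j : ZMod n) (hk : τ j ≤ k) :
    ecaUpTo n h τ k x j = ecaUpTo n h τ (τ j) x j := by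
  induction k with
  | zero =>
    have : τ j = 0 := by omega
    rw [this]
  | succ m ih =>
    rcases Nat.lt_or_ge (τ j) (m + 1) with hlt | hge
    · show ecaStep n h τ (m+1) (ecaUpTo n h τ m x) j = _
      unfold ecaStep
      rw [if_neg (by omega), ih (by omega)]
    · have : τ j = m + 1 := by omega
      rw [this]

lemma ecaAsync_eval (j : ZMod n) :
    ecaAsync n h τ x j =
      h (if τ (j - 1) < τ j then ecaAsync n h τ x (j - 1) else x (j - 1))
        (x j)
        (if τ (j + 1) < τ j then ecaAsync n h τ x (j + 1) else x (j + 1)) := by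
  have key : ∀ m : ZMod n, ∀ k : ℕ,
      ecaUpTo n h τ k x m =
        if τ m < k + 1 then ecaAsync n h τ x m else x m := by
    intro m k
    rcases Nat.lt_or_ge (τ m) (k + 1) with hlt | hge
    · rw [if_pos hlt]
      exact ecaUpTo_frozen k m (by omega)
    · rw [if_neg (by omega)]
      exact ecaUpTo_notYet k m (by omega)
  have hstart : ecaAsync n h τ x j = ecaUpTo n h τ (τ j) x j := rfl
  rw [hstart]
  cases hk : τ j with
  | zero =>
    simp only [ecaUpTo, ecaStep]
    rw [if_pos hk]
    simp
  | succ m =>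
    show ecaStep n h τ (m+1) (ecaUpTo n h τ m x) j = _
    unfold ecaStep
    rw [if_pos hk, key (j-1) m, key (j+1) m, ecaUpTo_notYet m j (by omega)]

/-- For rule 8, a cell that starts false stays false. -/
lemma ecaUpTo_dead (k : ℕ) (j : ZMod n) (hx : x j = false) :
    ecaUpTo n (fun a b c => !a && b && c) τ k x j = false := by
  induction k with
  | zero =>
    simp only [ecaUpTo, ecaStep]
    split <;> simp [hx]
  | succ m ih =>
    simp only [ecaUpTo, ecaStep]
    split <;> simp [ih]

lemma ecaAsync_dead (j : ZMod n) (hx : x j = false) :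
    ecaAsync n (fun a b c => !a && b && c) τ x j = false :=
  ecaUpTo_dead _ j hx

end Aux

lemma rule8_key (n : ℕ) (hn : 5 ≤ n) (τ τ' : ZMod n → ℕ) (i : ZMod n)
    (ha : τ i ≤ τ (i + 1)) (hb : τ' i ≤ τ' (i + 1))
    (hc : τ i ≤ τ (i - 1)) (hd : ¬ τ' i ≤ τ' (i - 1)) :
    ecaAsync n (fun a b c => !a && b && c) τ ≠
      ecaAsync n (fun a b c => !a && b && c) τ' := by
  have hn0 : NeZero n := ⟨by omega⟩
  have hne : ∀ m : ℕ, 0 < m → m < n → (m : ZMod n) ≠ 0 := by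
    intro m hm1 hm2 hcon
    rw [ZMod.natCast_eq_zero_iff] at hcon
    exact absurd (Nat.le_of_dvd hm1 hcon) (by omega)
  set r : Bool → Bool → Bool → Bool := fun a b c => !a && b && c with hr
  set x : ZMod n → Bool :=
    fun j => decide (j = i - 2 ∨ j = i - 1 ∨ j = i ∨ j = i + 1) with hxdef
  have hx2 : x (i - 2) = true := by simp [hxdef]
  have hx1 : x (i - 1) = true := by simp [hxdef]
  have hx0 : x i = true := by simp [hxdef]
  have hxp : x (i + 1) = true := by simp [hxdef]
  have hx3 : x (i - 3) = false := by
    have d1 : i - 3 ≠ i - 2 := fun hcon => hne 1 one_pos (by omega)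
      (by have := sub_eq_zero.mpr hcon; push_cast; linear_combination -this)
    have d2 : i - 3 ≠ i - 1 := fun hcon => hne 2 two_pos (by omega)
      (by have := sub_eq_zero.mpr hcon; push_cast; linear_combination -this)
    have d3 : i - 3 ≠ i := fun hcon => hne 3 (by omega) (by omega)
      (by have := sub_eq_zero.mpr hcon; push_cast; linear_combination -this)
    have d4 : i - 3 ≠ i + 1 := fun hcon => hne 4 (by omega) (by omega)
      (by have := sub_eq_zero.mpr hcon; push_cast; linear_combination -this)
    simp [hxdef, d1, d2, d3, d4]
  have e1 : i - 1 + 1 = i := by ring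
  have e2 : i - 1 - 1 = i - 2 := by ring
  have e3 : i - 2 + 1 = i - 1 := by ring
  have e4 : i - 2 - 1 = i - 3 := by ring
  intro heq
  have hpt : ecaAsync n r τ x i = ecaAsync n r τ' x i := by rw [heq]
  have hL : ecaAsync n r τ x i = false := by
    rw [ecaAsync_eval,
      if_neg (show ¬ τ (i - 1) < τ i by omega),
      if_neg (show ¬ τ (i + 1) < τ i by omega), hx1, hx0, hxp]
    simp [hr]
  have hm1 : ecaAsync n r τ' x (i - 1) = false := by
    rw [ecaAsync_eval, e1, e2,
      if_neg (show ¬ τ' i < τ' (i - 1) by omega), hx0]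
    rcases Nat.lt_or_ge (τ' (i - 2)) (τ' (i - 1)) with hlt | hge
    · rw [if_pos hlt]
      have hm2 : ecaAsync n r τ' x (i - 2) = true := by
        rw [ecaAsync_eval, e3, e4,
          if_neg (show ¬ τ' (i - 1) < τ' (i - 2) by omega), hx2, hx1]
        have h3v : (if τ' (i - 3) < τ' (i - 2) then ecaAsync n r τ' x (i - 3)
            else x (i - 3)) = false := by
          split
          · exact ecaAsync_dead _ hx3
          · exact hx3
        rw [h3v]
        simp [hr]
      rw [hm2, hx1]
      simp [hr]
    · rw [if_neg (show ¬ τ' (i - 2) < τ' (i - 1) by omega), hx2, hx1]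
      simp [hr]
  have hR : ecaAsync n r τ' x i = true := by
    rw [ecaAsync_eval,
      if_pos (show τ' (i - 1) < τ' i by omega),
      if_neg (show ¬ τ' (i + 1) < τ' i by omega), hm1, hx0, hxp]
    simp [hr]
  rw [hL, hR] at hpt
  exact absurd hpt (by simp)

/-- Rule 8: if the arc $(i+1,i)$ is labeled ⊕ in both schedules, the label of
arc $(i-1,i)$ differs, and all counter-clockwise labels agree, then the
dynamics differ. -/
theorem rule_8_neq (n : ℕ) (hn : 5 ≤ n) (τ τ' : ZMod n → ℕ) (i : ZMod n)
    (h1 : lab n τ (i + 1) i = true ∧ lab n τ' (i + 1) i = true)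
    (h2 : lab n τ (i - 1) i ≠ lab n τ' (i - 1) i)
    (h3 : ∀ j : ZMod n, lab n τ j (j - 1) = lab n τ' j (j - 1)) :
    ecaAsync n (fun a b c => !a && b && c) τ ≠
      ecaAsync n (fun a b c => !a && b && c) τ' := by
  obtain ⟨h1a, h1b⟩ := h1
  unfold lab at h1a h1b h2
  rw [decide_eq_true_iff] at h1a h1b
  by_cases hτ : τ i ≤ τ (i - 1)
  · have hτ' : ¬ τ' i ≤ τ' (i - 1) := by
      intro hcon; exact h2 (by simp [hτ, hcon])
    exact rule8_key n hn τ τ' i h1a h1b hτ hτ'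
  · have hτ' : τ' i ≤ τ' (i - 1) := by
      by_contra hcon; exact h2 (by simp [hτ, hcon])
    exact (rule8_key n hn τ' τ i h1b h1a hτ' hτ).symm
end
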